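/- Let q be a real number with 0 < q < 1, let H = ℓ²(ℕ) with standard orthonormal basis (e_k)_{k∈ℕ}, and for each sign ε ∈ {+1,−1} define bounded operators K_ε and L on H by K_ε e_k = ε·q^{2k} e_k and L e_k = √(1−q^{4k}) e_{k−1} (the coefficient vanishes for k = 0). Then K_ε is self-adjoint and the relations L ∘ K_ε = q² K_ε ∘ L, L* ∘ L + K_ε² = 1, and L ∘ L* + q⁴ K_ε² = 1 hold; that is, K_ε and L define the two irreducible infinite-dimensional *-representations π_± of the coordinate *-algebra O(S²_{q,1}) of the equator Podleś quantum sphere. -/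

import Mathlib

open ContinuousLinearMap in
/-- For `0 < q < 1`, a sign `ε ∈ {+1, -1}` and the bounded operators on
`ℓ²(ℕ)` given by `K_ε e_k = ε q^{2k} e_k` and `L e_k = √(1-q^{4k}) e_{k-1}` (vanishing for
`k = 0`), the operator `K_ε` is self-adjoint and `L K_ε = q² K_ε L`, `L* L + K_ε² = 1`,
`L L* + q⁴ K_ε² = 1`; i.e. they define the irreducible infinite-dimensional
`*`-representations `π_±` of `O(S²_{q,1})`. -/
theorem stmt11 {H : Type*} [NormedAddCommGroup H] [InnerProductSpace ℂ H] [CompleteSpace H]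
    (e : HilbertBasis ℕ ℂ H) (q ε : ℝ) (hq0 : 0 < q) (hq1 : q < 1)
    (hε : ε = 1 ∨ ε = -1)
    (K L : H →L[ℂ] H)
    (hK : ∀ k : ℕ, K (e k) = ((ε * q ^ (2 * k) : ℝ) : ℂ) • e k)
    (hL0 : L (e 0) = 0)
    (hL : ∀ k : ℕ, L (e (k + 1)) = ((Real.sqrt (1 - q ^ (4 * (k + 1))) : ℝ) : ℂ) • e k) :
    IsSelfAdjoint K ∧
    L * K = ((q : ℂ) ^ 2) • (K * L) ∧
    adjoint L * L + K ^ 2 = 1 ∧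
    L * adjoint L + ((q : ℂ) ^ 4) • K ^ 2 = 1 := by
  classical
  have hee : ∀ i j : ℕ, (inner ℂ (e i) (e j) : ℂ) = if i = j then 1 else 0 :=
    orthonormal_iff_ite.mp e.orthonormal
  have hε2 : (ε : ℂ) * (ε : ℂ) = 1 := by
    rcases hε with h | h <;> simp [h]
  have hsq : ∀ k : ℕ, (0:ℝ) ≤ 1 - q ^ (4 * (k+1)) := by
    intro k
    have : q ^ (4 * (k+1)) ≤ 1 := pow_le_one₀ hq0.le hq1.le
    linarith
  have vext : ∀ x y : H, (∀ i, (inner ℂ (e i) x : ℂ) = inner ℂ (e i) y) → x = y := by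
    intro x y h
    apply e.repr.injective
    ext i
    simpa only [e.repr_apply_apply] using h i
  have oext : ∀ A B : H →L[ℂ] H, (∀ k, A (e k) = B (e k)) → A = B := by
    intro A B h
    have hd : Dense (Submodule.span ℂ (Set.range (e : ℕ → H)) : Set H) := by
      rw [Submodule.dense_iff_topologicalClosure_eq_top]
      exact e.dense_span
    refine ContinuousLinearMap.ext_on hd ?_
    rintro _ ⟨k, rfl⟩
    exact h k
  -- adjoint of L on basis
  have adjL : ∀ k : ℕ, adjoint L (e k)
      = ((Real.sqrt (1 - q ^ (4 * (k + 1))) : ℝ) : ℂ) • e (k + 1) := by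
    intro k
    apply vext
    intro i
    rw [adjoint_inner_right]
    cases i with
    | zero =>
      rw [hL0, inner_zero_left, inner_smul_right, hee]
      simp
    | succ m =>
      rw [hL m]
      simp only [inner_smul_left, inner_smul_right, hee, Complex.conj_ofReal]
      by_cases h : m = k
      · subst h; simp
      · simp [h, Nat.succ_ne_succ, fun h' : m + 1 = k + 1 => h (Nat.succ_injective h')]
  -- adjoint of K
  have adjK : adjoint K = K := by
    apply oext
    intro k
    apply vext
    intro i
    rw [adjoint_inner_right, hK, hK]
    simp only [inner_smul_left, inner_smul_right, hee, Complex.conj_ofReal]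
    by_cases h : i = k
    · subst h; rfl
    · simp [h]
  refine ⟨ContinuousLinearMap.isSelfAdjoint_iff'.mpr adjK, ?_, ?_, ?_⟩
  · apply oext
    intro k
    simp only [mul_apply_eq_comp, smul_apply]
    cases k with
    | zero => simp [hK, hL0, map_smul]
    | succ m =>
      rw [hK, map_smul, hL, map_smul, hK, smul_smul, smul_smul, smul_smul]
      congr 1
      push_cast
      ring
  · apply oext
    intro k
    simp only [add_apply, mul_apply_eq_comp, pow_two, one_apply_eq_self]
    cases k with
    | zero =>
      rw [hL0, map_zero, hK, map_smul, hK, smul_smul]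
      have : ((ε * q ^ (2 * 0) : ℝ) : ℂ) * ((ε * q ^ (2 * 0) : ℝ) : ℂ) = 1 := by
        push_cast
        simp only [mul_zero, pow_zero, mul_one]
        exact hε2
      rw [this, one_smul, zero_add]
    | succ m =>
      rw [hL, map_smul, adjL, hK, map_smul, hK, smul_smul, smul_smul, ← add_smul]
      have : ((Real.sqrt (1 - q ^ (4 * (m + 1))) : ℝ) : ℂ) *
            ((Real.sqrt (1 - q ^ (4 * (m + 1))) : ℝ) : ℂ)
          + ((ε * q ^ (2 * (m+1)) : ℝ) : ℂ) * ((ε * q ^ (2 * (m+1)) : ℝ) : ℂ) = 1 := by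
        rw [← Complex.ofReal_mul, Real.mul_self_sqrt (hsq m)]
        push_cast
        have : ((q:ℂ)) ^ (2*(m+1)) * (q:ℂ) ^ (2*(m+1)) = (q:ℂ) ^ (4*(m+1)) := by
          rw [← pow_add]; ring_nf
        linear_combination ((q:ℂ))^(4*(m+1)) * hε2
      rw [this, one_smul]
  · apply oext
    intro k
    simp only [add_apply, mul_apply_eq_comp, pow_two, smul_apply, one_apply_eq_self]
    rw [adjL, map_smul, hL, hK, map_smul, hK, smul_smul, smul_smul, smul_smul, ← add_smul]
    have : ((Real.sqrt (1 - q ^ (4 * (k + 1))) : ℝ) : ℂ) *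
          ((Real.sqrt (1 - q ^ (4 * (k + 1))) : ℝ) : ℂ)
        + (q:ℂ)^4 * ((ε * q ^ (2 * k) : ℝ) : ℂ) * ((ε * q ^ (2 * k) : ℝ) : ℂ) = 1 := by
      rw [← Complex.ofReal_mul, Real.mul_self_sqrt (hsq k)]
      push_cast
      have h4 : (q:ℂ)^4 * ((q:ℂ) ^ (2*k) * (q:ℂ) ^ (2*k)) = (q:ℂ) ^ (4*(k+1)) := by
        rw [← pow_add, ← pow_add]; ring_nf
      linear_combination ((q:ℂ))^(4*(k+1)) * hε2
    rw [this, one_smul]
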